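/- (Birkhoff–Tartar fixed point theorem) Let H be a Hilbert space ordered by a closed convex cone C satisfying C = {h ∈ H : (h,g)_H ≥ 0 for all g ∈ C}. Let T: H → H be increasing (h₁ ≤ h₂ ⟹ T(h₁) ≤ T(h₂)), and suppose there exist a subsolution h̲ with h̲ ≤ T(h̲) and a supersolution h̄ with T(h̄) ≤ h̄, and h̲ ≤ h̄. Then the set of fixed points of T in the order interval [h̲, h̄] is nonempty and possesses a minimal element and a maximal element. -/

import Mathlib

theorem bt_aux
    {H : Type*} [NormedAddCommGroup H] [InnerProductSpace ℝ H] [CompleteSpace H]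
    (C : Set H) (hCclosed : IsClosed C) (hCconvex : Convex ℝ C)
    (hCcone : ∀ (c : ℝ) (x : H), 0 ≤ c → x ∈ C → c • x ∈ C)
    (hCselfdual : C = {h : H | ∀ g ∈ C, 0 ≤ (inner ℝ h g : ℝ)})
    (T : H → H)
    (hTmono : ∀ h₁ h₂ : H, h₂ - h₁ ∈ C → T h₂ - T h₁ ∈ C)
    (hsub hsup : H)
    (hsubsol : T hsub - hsub ∈ C) (hsupsol : hsup - T hsup ∈ C)
    (hle : hsup - hsub ∈ C) :
    ∃ m : H, (T m = m ∧ m - hsub ∈ C ∧ hsup - m ∈ C) ∧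
        ∀ x : H, T x = x → x - hsub ∈ C → hsup - x ∈ C → x - m ∈ C := by
  -- basic cone facts
  have hpos : ∀ x ∈ C, ∀ y ∈ C, (0:ℝ) ≤ inner ℝ x y := by
    intro x hx y hy
    have := hCselfdual ▸ hx
    exact this y hy
  have hC0 : (0:H) ∈ C := by
    have := hCcone 0 _ le_rfl hle
    simpa using this
  have hadd : ∀ x ∈ C, ∀ y ∈ C, x + y ∈ C := by
    intro x hx y hy
    have hmid : (1/2 : ℝ) • x + (1/2 : ℝ) • y ∈ C :=
      hCconvex hx hy (by norm_num) (by norm_num) (by norm_num)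
    have := hCcone 2 _ (by norm_num) hmid
    have h2 : (2:ℝ) • ((1/2 : ℝ) • x + (1/2 : ℝ) • y) = x + y := by
      rw [smul_add, smul_smul, smul_smul]; norm_num
    rwa [h2] at this
  have hanti : ∀ x ∈ C, -x ∈ C → x = 0 := by
    intro x hx hnx
    have h1 : (0:ℝ) ≤ inner ℝ (-x) x := hpos _ hnx _ hx
    rw [inner_neg_left] at h1
    have h2 : (inner ℝ x x : ℝ) = 0 := le_antisymm (by linarith) real_inner_self_nonneg
    exact inner_self_eq_zero.mp h2
  -- key quantitative lemma
  set d : H := hsup - hsub with hd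
  have key : ∀ p q : H, p - hsub ∈ C → q - p ∈ C → hsup - q ∈ C →
      ‖q - p‖^2 ≤ (inner ℝ (q - hsub) d : ℝ) - inner ℝ (p - hsub) d := by
    intro p q hp hqp hq
    have h1 : (0:ℝ) ≤ inner ℝ (q - p) (hsup - q) := hpos _ hqp _ hq
    have h2 : (0:ℝ) ≤ inner ℝ (q - p) (p - hsub) := hpos _ hqp _ hp
    have e1 : (inner ℝ (q - hsub) d : ℝ) - inner ℝ (p - hsub) d = inner ℝ (q - p) d := by
      rw [← inner_sub_left]
      congr 1
      abel
    have e2 : d = (hsup - q) + (p - hsub) + (q - p) := by rw [hd]; abel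
    have e3 : (inner ℝ (q - p) d : ℝ)
        = inner ℝ (q - p) (hsup - q) + inner ℝ (q - p) (p - hsub) + inner ℝ (q - p) (q - p) := by
      conv_lhs => rw [e2]
      rw [inner_add_right, inner_add_right]
    have e4 : (inner ℝ (q - p) (q - p) : ℝ) = ‖q - p‖^2 := real_inner_self_eq_norm_sq _
    rw [e1, e3, e4]
    linarith
  -- the set of subsolutions lying below every supersolution
  set S : Set H := {h | h - hsub ∈ C ∧ T h - h ∈ C ∧
      ∀ w : H, w - T w ∈ C → w - hsub ∈ C → hsup - w ∈ C → w - h ∈ C} with hS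
  have hsubS : hsub ∈ S := by
    refine ⟨by simpa using hC0, hsubsol, fun w _ hw _ => hw⟩
  have hSbelow : ∀ h ∈ S, hsup - h ∈ C := by
    intro h hh
    exact hh.2.2 hsup hsupsol hle (by simpa using hC0)
  have hTS : ∀ h ∈ S, T h ∈ S := by
    intro h hh
    refine ⟨?_, hTmono h (T h) hh.2.1, ?_⟩
    · have := hadd _ hh.2.1 _ hh.1
      have e : T h - h + (h - hsub) = T h - hsub := by abel
      rwa [e] at this
    · intro w hw1 hw2 hw3
      have hhw : w - h ∈ C := hh.2.2 w hw1 hw2 hw3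
      have h1 : T w - T h ∈ C := hTmono h w hhw
      have := hadd _ hw1 _ h1
      have e : w - T w + (T w - T h) = w - T h := by abel
      rwa [e] at this
  -- Zorn's lemma on the subtype
  set r : ↥S → ↥S → Prop := fun x y => (y:H) - x ∈ C with hr
  have hrtrans : ∀ {a b c : ↥S}, r a b → r b c → r a c := by
    intro a b c hab hbc
    have := hadd _ hbc _ hab
    have e : (c:H) - b + ((b:H) - a) = (c:H) - a := by abel
    simpa [hr, e] using this
  have hchains : ∀ c : Set ↥S, IsChain r c → ∃ ub, ∀ a ∈ c, r a ub := by
    intro c hc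
    rcases c.eq_empty_or_nonempty with hce | hce
    · exact ⟨⟨hsub, hsubS⟩, by simp [hce]⟩
    -- nonempty chain: construct the limit
    set φ : ↥S → ℝ := fun h => inner ℝ ((h:H) - hsub) d with hφ
    set A : Set ℝ := φ '' c with hA
    have hAne : A.Nonempty := hce.image φ
    have hAbdd : BddAbove A := by
      refine ⟨inner ℝ d d, ?_⟩
      rintro x ⟨h, hhc, rfl⟩
      have h1 : (0:ℝ) ≤ inner ℝ (hsup - (h:H)) d := hpos _ (hSbelow _ h.2) _ hle
      have e : (inner ℝ d d : ℝ) - inner ℝ ((h:H) - hsub) d = inner ℝ (hsup - (h:H)) d := by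
        rw [← inner_sub_left]
        congr 1
        rw [hd]; abel
      simp only [hφ]
      linarith [e ▸ h1]
    set s : ℝ := sSup A with hs
    have hub : ∀ h ∈ c, φ h ≤ s := fun h hh => le_csSup hAbdd ⟨h, hh, rfl⟩
    have hsel : ∀ n : ℕ, ∃ h ∈ c, s - 1/(n+1) < φ h := by
      intro n
      have hlt : s - 1/(n+1) < s := by
        have : (0:ℝ) < 1/(n+1) := by positivity
        linarith
      obtain ⟨x, hx, hlt2⟩ := exists_lt_of_lt_csSup hAne hlt
      obtain ⟨h, hhc, rfl⟩ := hx
      exact ⟨h, hhc, hlt2⟩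
    choose f hfc hfφ using hsel
    -- squared distance bound between chain elements
    have hdist : ∀ (x y : ↥S), x ∈ c → y ∈ c → r x y →
        ‖(y:H) - x‖^2 ≤ s - φ x := by
      intro x y hx hy hxy
      have h1 := key (x:H) (y:H) x.2.1 hxy (hSbelow _ y.2)
      have h2 := hub y hy
      simp only [hφ] at *
      linarith
    have hcomp : ∀ (x y : ↥S), x ∈ c → y ∈ c → r x y ∨ r y x := by
      intro x y hx hy
      rcases eq_or_ne x y with rfl | hne
      · left; simpa [hr] using hC0
      · rcases hc hx hy hne with h | h
        · exact Or.inl h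
        · exact Or.inr h
    -- (f n) is a Cauchy sequence
    have hcauchy : CauchySeq (fun n => (f n : H)) := by
      rw [Metric.cauchySeq_iff]
      intro ε hε
      obtain ⟨N, hN⟩ := exists_nat_gt (1/ε^2)
      have hε2 : (0:ℝ) < ε^2 := by positivity
      have hNε : (1:ℝ)/(N+1) < ε^2 := by
        rw [div_lt_iff₀ (by positivity)]
        rw [div_lt_iff₀ hε2] at hN
        nlinarith
      have hbound : ∀ j k : ℕ, N ≤ k → r (f k) (f j) → dist (f j : H) (f k : H) < ε := by
        intro j k hk hjk
        have h1 : ‖(f j : H) - f k‖^2 ≤ s - φ (f k) := hdist _ _ (hfc k) (hfc j) hjk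
        have h2 : s - φ (f k) < 1/(k+1) := by have := hfφ k; linarith
        have h3 : (1:ℝ)/(k+1) ≤ 1/(N+1) := by
          apply one_div_le_one_div_of_le (by positivity)
          have : (N:ℝ) ≤ k := by exact_mod_cast hk
          linarith
        rw [dist_eq_norm]
        nlinarith [norm_nonneg ((f j : H) - f k)]
      refine ⟨N, fun m hm n hn => ?_⟩
      rcases hcomp (f n) (f m) (hfc n) (hfc m) with h | h
      · exact hbound m n hn h
      · rw [dist_comm]; exact hbound n m hm h
    obtain ⟨z, hz⟩ := cauchySeq_tendsto_of_complete hcauchy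
    -- z is an upper bound of the chain
    have hup : ∀ y ∈ c, z - ((y : ↥S) : H) ∈ C := by
      intro y hy
      have : z - (y:H) ∈ closure C := by
        rw [Metric.mem_closure_iff]
        intro ε hε
        obtain ⟨N1, hN1⟩ := (Metric.tendsto_atTop.mp hz) (ε/2) (by positivity)
        obtain ⟨N2, hN2⟩ := exists_nat_gt (1/(ε/2)^2)
        have hε2 : (0:ℝ) < (ε/2)^2 := by positivity
        have hN2ε : (1:ℝ)/(N2+1) < (ε/2)^2 := by
          rw [div_lt_iff₀ (by positivity)]
          rw [div_lt_iff₀ hε2] at hN2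
          nlinarith
        set n := max N1 N2 with hn
        have hd1 : dist ((f n : H)) z < ε/2 := hN1 n (le_max_left _ _)
        rcases hcomp y (f n) hy (hfc n) with h | h
        · refine ⟨(f n : H) - y, h, ?_⟩
          rw [dist_eq_norm]
          have e : z - (y:H) - ((f n : H) - y) = z - (f n : H) := by abel
          rw [e, ← dist_eq_norm, dist_comm]
          linarith
        · refine ⟨0, hC0, ?_⟩
          have h1 : ‖(y:H) - f n‖^2 ≤ s - φ (f n) := hdist _ _ (hfc n) hy h
          have h2 : s - φ (f n) < 1/(n+1) := by have := hfφ n; linarith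
          have h3 : (1:ℝ)/(n+1) ≤ 1/(N2+1) := by
            apply one_div_le_one_div_of_le (by positivity)
            have : (N2:ℝ) ≤ n := by exact_mod_cast le_max_right N1 N2
            linarith
          have h4 : ‖(y:H) - f n‖ < ε/2 := by
            nlinarith [norm_nonneg ((y:H) - f n)]
          calc dist (z - (y:H)) 0 = ‖z - (y:H)‖ := by simp [dist_eq_norm]
            _ ≤ ‖z - (f n : H)‖ + ‖(f n : H) - y‖ := by
                have e : z - (y:H) = (z - (f n:H)) + ((f n:H) - y) := by abel
                rw [e]; exact norm_add_le _ _
            _ < ε/2 + ε/2 := by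
                have : ‖z - (f n : H)‖ < ε/2 := by rw [← dist_eq_norm, dist_comm]; exact hd1
                have : ‖(f n : H) - (y:H)‖ < ε/2 := by rw [norm_sub_rev]; exact h4
                linarith [(by rw [← dist_eq_norm, dist_comm]; exact hd1 : ‖z - (f n : H)‖ < ε/2)]
            _ = ε := by ring
      rwa [hCclosed.closure_eq] at this
    -- z ∈ S
    have hzS : z ∈ S := by
      refine ⟨?_, ?_, ?_⟩
      · have htt : Filter.Tendsto (fun n => (f n : H) - hsub) Filter.atTop (nhds (z - hsub)) :=
          hz.sub tendsto_const_nhds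
        exact hCclosed.mem_of_tendsto htt (Filter.Eventually.of_forall fun n => (f n).2.1)
      · have hterm : ∀ n : ℕ, T z - (f n : H) ∈ C := by
          intro n
          have h1 : T z - T (f n : H) ∈ C := hTmono _ _ (hup _ (hfc n))
          have h2 : T (f n : H) - (f n : H) ∈ C := (f n).2.2.1
          have := hadd _ h1 _ h2
          have e : T z - T (f n:H) + (T (f n:H) - (f n:H)) = T z - (f n:H) := by abel
          rwa [e] at this
        have htt : Filter.Tendsto (fun n => T z - (f n : H)) Filter.atTop (nhds (T z - z)) :=
          tendsto_const_nhds.sub hz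
        exact hCclosed.mem_of_tendsto htt (Filter.Eventually.of_forall hterm)
      · intro w hw1 hw2 hw3
        have htt : Filter.Tendsto (fun n => w - (f n : H)) Filter.atTop (nhds (w - z)) :=
          tendsto_const_nhds.sub hz
        exact hCclosed.mem_of_tendsto htt
          (Filter.Eventually.of_forall fun n => (f n).2.2.2 w hw1 hw2 hw3)
    exact ⟨⟨z, hzS⟩, fun a ha => hup a ha⟩
  obtain ⟨m, hm⟩ := exists_maximal_of_chains_bounded hchains (fun {a b c} => hrtrans)
  -- m is a fixed point
  have hmT : r m ⟨T (m:H), hTS _ m.2⟩ := m.2.2.1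
  have hTm : T (m:H) = (m:H) := by
    have h2 : (m:H) - T (m:H) ∈ C := hm _ hmT
    have h3 : T (m:H) - (m:H) ∈ C := m.2.2.1
    have := hanti _ h3 (by simpa using h2)
    exact sub_eq_zero.mp this
  refine ⟨(m:H), ⟨hTm, m.2.1, hSbelow _ m.2⟩, ?_⟩
  intro x hx hx1 hx2
  exact m.2.2.2 x (by simp [hx, hC0]) hx1 hx2

/-- Birkhoff–Tartar: an increasing map on a Hilbert space ordered by a
self-dual closed convex cone, admitting a subsolution below a supersolution, has a
nonempty fixed-point set in the order interval, with minimal and maximal elements. -/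
theorem birkhoff_tartar
    {H : Type*} [NormedAddCommGroup H] [InnerProductSpace ℝ H] [CompleteSpace H]
    (C : Set H) (hCclosed : IsClosed C) (hCconvex : Convex ℝ C)
    (hCcone : ∀ (c : ℝ) (x : H), 0 ≤ c → x ∈ C → c • x ∈ C)
    (hCselfdual : C = {h : H | ∀ g ∈ C, 0 ≤ (inner ℝ h g : ℝ)})
    (T : H → H)
    (hTmono : ∀ h₁ h₂ : H, h₂ - h₁ ∈ C → T h₂ - T h₁ ∈ C)
    (hsub hsup : H)
    (hsubsol : T hsub - hsub ∈ C) (hsupsol : hsup - T hsup ∈ C)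
    (hle : hsup - hsub ∈ C) :
    (∃ m : H, (T m = m ∧ m - hsub ∈ C ∧ hsup - m ∈ C) ∧
        ∀ x : H, T x = x → x - hsub ∈ C → hsup - x ∈ C → x - m ∈ C) ∧
    (∃ M : H, (T M = M ∧ M - hsub ∈ C ∧ hsup - M ∈ C) ∧
        ∀ x : H, T x = x → x - hsub ∈ C → hsup - x ∈ C → M - x ∈ C) := by
  constructor
  · exact bt_aux C hCclosed hCconvex hCcone hCselfdual T hTmono hsub hsup hsubsol hsupsol hle
  · -- apply the aux lemma to the reflected problem
    set T' : H → H := fun h => -T (-h) with hT'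
    have hTmono' : ∀ h₁ h₂ : H, h₂ - h₁ ∈ C → T' h₂ - T' h₁ ∈ C := by
      intro h₁ h₂ h
      have h' : (-h₁) - (-h₂) ∈ C := by
        have e : (-h₁) - (-h₂) = h₂ - h₁ := by abel
        rwa [e]
      have h2 := hTmono (-h₂) (-h₁) h'
      have e : T' h₂ - T' h₁ = T (-h₁) - T (-h₂) := by simp only [hT']; abel
      rwa [e]
    have hsubsol' : T' (-hsup) - (-hsup) ∈ C := by
      have : T' (-hsup) - (-hsup) = hsup - T hsup := by simp [hT']; abel
      rwa [this]
    have hsupsol' : (-hsub) - T' (-hsub) ∈ C := by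
      have : (-hsub) - T' (-hsub) = T hsub - hsub := by simp [hT']; abel
      rwa [this]
    have hle' : (-hsub) - (-hsup) ∈ C := by
      have : (-hsub) - (-hsup) = hsup - hsub := by abel
      rwa [this]
    obtain ⟨m', ⟨hTm', hm1', hm2'⟩, hmin'⟩ :=
      bt_aux C hCclosed hCconvex hCcone hCselfdual T' hTmono' (-hsup) (-hsub)
        hsubsol' hsupsol' hle'
    refine ⟨-m', ⟨?_, ?_, ?_⟩, ?_⟩
    · have h := hTm'
      simp only [hT'] at h
      exact neg_eq_iff_eq_neg.mp h
    · have e : -m' - hsub = (-hsub) - m' := by abel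
      rwa [e]
    · have e : hsup - (-m') = m' - (-hsup) := by abel
      rwa [e]
    · intro x hx hx1 hx2
      have hfix : T' (-x) = -x := by simp [hT', hx]
      have h1 : (-x) - (-hsup) ∈ C := by
        have e : (-x) - (-hsup) = hsup - x := by abel
        rwa [e]
      have h2 : (-hsub) - (-x) ∈ C := by
        have e : (-hsub) - (-x) = x - hsub := by abel
        rwa [e]
      have := hmin' (-x) hfix h1 h2
      have e : (-x) - m' = (-m') - x := by abel
      rwa [e] at this
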